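/- For integers n ≥ 0 and 0 ≤ k ≤ n, let N(n,k) be the number of 321-avoiding permutations π of {1,…,n+1} such that exactly n − k indices i ∈ {1,…,n} satisfy π({1,…,i}) = {1,…,i}. Then (n+1)·N(n,k) = (n−k+1)·binom(n+k, k); that is, N(n,k) equals the number of standard Young tableaux of shape (n,k), which by the hook length formula is ((n−k+1)/(n+1))·binom(n+k, k). -/

import Mathlib

/-- A permutation `π` of `{1,…,m}` (modeled as `Fin m`, where the 1-based index `i`
corresponds to the element of value `i - 1`) is 321-avoiding if there are no indices
`i < j < k` with `π k < π j < π i`. -/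
def Avoids321 {m : ℕ} (π : Equiv.Perm (Fin m)) : Prop :=
  ∀ i j k : Fin m, i < j → j < k → ¬(π k < π j ∧ π j < π i)

namespace Stmt11

/-- touch count: number of `j < n` with `M j = j`. -/
def tc (n : ℕ) (M : Fin (n+1) → Fin (n+1)) : ℕ :=
  (Finset.univ.filter fun j : Fin (n+1) => (j : ℕ) < n ∧ M j = j).card

def Tset (n k : ℕ) : Type :=
  {M : Fin (n+1) → Fin (n+1) // Monotone M ∧ (∀ i : Fin (n+1), (i : ℕ) ≤ (M i : ℕ)) ∧ tc n M + k = n}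

instance (n k : ℕ) : Finite (Tset n k) := by unfold Tset; infer_instance

noncomputable def t (n k : ℕ) : ℕ := Nat.card (Tset n k)

lemma t_zero {n k : ℕ} (h : n < k) : t n k = 0 := by
  have : IsEmpty (Tset n k) := by
    constructor
    rintro ⟨M, -, -, htc⟩
    omega
  simp [t, Nat.card_of_isEmpty]

lemma tc_le (n : ℕ) (M : Fin (n+1) → Fin (n+1)) : tc n M ≤ n := by
  classical
  have h1 : (Finset.univ.filter fun j : Fin (n+1) => (j : ℕ) < n ∧ M j = j) ⊆
      Finset.Iio (Fin.last n) := by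
    intro j hj
    simp only [Finset.mem_filter] at hj
    simp only [Finset.mem_Iio]
    rw [Fin.lt_def, Fin.val_last]
    exact hj.2.1
  have h2 := Finset.card_le_card h1
  simpa [tc, Fin.card_Iio] using h2


lemma filter_lt_card (n : ℕ) :
    (Finset.univ.filter fun j : Fin (n+1) => (j : ℕ) < n).card = n := by
  have he : (Finset.univ.filter fun j : Fin (n+1) => (j : ℕ) < n) =
      Finset.univ.map Fin.castSuccEmb := by
    ext j
    simp only [Finset.mem_filter, Finset.mem_univ, true_and, Finset.mem_map]
    constructor
    · intro h
      exact ⟨⟨(j : ℕ), h⟩, by ext; simp⟩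
    · rintro ⟨a, ha⟩
      rw [← ha]
      simpa using a.isLt
  rw [he, Finset.card_map, Finset.card_univ, Fintype.card_fin]

lemma tc_eq_self_imp {n : ℕ} (N : Fin (n+1) → Fin (n+1))
    (hNge : ∀ i : Fin (n+1), (i : ℕ) ≤ (N i : ℕ)) (hNtc : tc n N = n) : N = id := by
  classical
  have hsub : (Finset.univ.filter fun j : Fin (n+1) => (j : ℕ) < n ∧ N j = j) ⊆
      (Finset.univ.filter fun j : Fin (n+1) => (j : ℕ) < n) := by
    intro j hj
    simp only [Finset.mem_filter] at hj ⊢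
    exact ⟨hj.1, hj.2.1⟩
  have heq := Finset.eq_of_subset_of_card_le hsub (by
    rw [filter_lt_card]
    unfold tc at hNtc
    omega)
  funext j
  by_cases hj : (j : ℕ) < n
  · have hmem : j ∈ (Finset.univ.filter fun j : Fin (n+1) => (j : ℕ) < n) := by
      simp only [Finset.mem_filter, Finset.mem_univ, true_and]
      exact hj
    rw [← heq, Finset.mem_filter] at hmem
    exact hmem.2.2
  · have h1 := hNge j
    have h2 := (N j).isLt
    have h3 := j.isLt
    simp only [id_eq]
    apply Fin.ext
    omega

lemma t_base (n : ℕ) : t n 0 = 1 := by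
  classical
  rw [t, Nat.card_eq_one_iff_unique]
  refine ⟨⟨?_⟩, ?_⟩
  · rintro ⟨M, hM, hge, htc⟩ ⟨M', hM', hge', htc'⟩
    have e1 := tc_eq_self_imp M hge (by omega)
    have e2 := tc_eq_self_imp M' hge' (by omega)
    apply Subtype.ext
    show M = M'
    rw [e1, e2]
  · refine ⟨⟨id, monotone_id, fun i => le_rfl, ?_⟩⟩
    show tc n id + 0 = n
    have : (Finset.univ.filter fun j : Fin (n+1) => (j : ℕ) < n ∧ (id j : Fin (n+1)) = j) =
        (Finset.univ.filter fun j : Fin (n+1) => (j : ℕ) < n) := by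
      ext j
      simp
    rw [tc, this, filter_lt_card]
    omega


section Shrink

variable {n : ℕ}

/-- remove initial touch at 0 -/
def shrink (M : Fin (n+2) → Fin (n+2)) : Fin (n+1) → Fin (n+1) :=
  fun j => ⟨(M j.succ).val - 1, by have := (M j.succ).isLt; omega⟩

lemma shrink_val (M : Fin (n+2) → Fin (n+2)) (j : Fin (n+1)) :
    (shrink M j : ℕ) = (M j.succ).val - 1 := rfl

lemma tc_shrink (M : Fin (n+2) → Fin (n+2)) (h0 : M 0 = 0)
    (hge : ∀ i : Fin (n+2), (i : ℕ) ≤ (M i : ℕ)) :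
    tc (n+1) M = tc n (shrink M) + 1 := by
  classical
  have key : (Finset.univ.filter fun j : Fin (n+2) => (j : ℕ) < n+1 ∧ M j = j) =
      insert (0 : Fin (n+2))
        ((Finset.univ.filter fun j : Fin (n+1) => (j : ℕ) < n ∧ shrink M j = j).image
          Fin.succ) := by
    ext j
    simp only [Finset.mem_filter, Finset.mem_univ, true_and, Finset.mem_insert,
      Finset.mem_image]
    constructor
    · rintro ⟨hlt, heq⟩
      rw [Fin.ext_iff] at heq
      by_cases hj0 : (j : ℕ) = 0
      · exact Or.inl (Fin.ext hj0)
      · have hjlt := j.isLt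
        refine Or.inr ⟨⟨(j : ℕ) - 1, by omega⟩, ⟨show (j : ℕ) - 1 < n by omega, ?_⟩, ?_⟩
        · apply Fin.ext
          rw [shrink_val]
          have hsucc : (⟨(j : ℕ) - 1, by omega⟩ : Fin (n+1)).succ = j := by
            apply Fin.ext
            rw [Fin.val_succ]
            show (j : ℕ) - 1 + 1 = (j : ℕ)
            omega
          rw [hsucc]
          show (M j).val - 1 = (j : ℕ) - 1
          omega
        · apply Fin.ext
          rw [Fin.val_succ]
          show (j : ℕ) - 1 + 1 = (j : ℕ)
          omega
    · rintro (hj | ⟨a, ⟨halt, hae⟩, haj⟩)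
      · subst hj
        refine ⟨by simp, h0⟩
      · subst haj
        rw [Fin.ext_iff, shrink_val] at hae
        have hge' := hge a.succ
        rw [Fin.val_succ] at hge'
        refine ⟨by rw [Fin.val_succ]; omega, ?_⟩
        apply Fin.ext
        rw [Fin.val_succ]
        omega
  have h0mem : (0 : Fin (n+2)) ∉
      ((Finset.univ.filter fun j : Fin (n+1) => (j : ℕ) < n ∧ shrink M j = j).image
        Fin.succ) := by
    simp only [Finset.mem_image, not_exists]
    rintro a ⟨-, ha⟩
    exact (Fin.succ_ne_zero a) ha
  rw [tc, key, Finset.card_insert_of_notMem h0mem,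
    Finset.card_image_of_injective _ (Fin.succ_injective _)]
  rfl

def grow (N : Fin (n+1) → Fin (n+1)) : Fin (n+2) → Fin (n+2) :=
  fun j => if h : (j : ℕ) = 0 then 0 else
    ⟨(N ⟨(j : ℕ) - 1, by have := j.isLt; omega⟩).val + 1,
      Nat.succ_lt_succ (N _).isLt⟩

lemma grow_zero (N : Fin (n+1) → Fin (n+1)) : grow N 0 = 0 := by simp [grow]

lemma grow_val_pos (N : Fin (n+1) → Fin (n+1)) (j : Fin (n+2)) (h : (j : ℕ) ≠ 0) :
    (grow N j : ℕ) = (N ⟨(j : ℕ) - 1, by have := j.isLt; omega⟩).val + 1 := by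
  rw [grow, dif_neg h]

lemma grow_mono (N : Fin (n+1) → Fin (n+1)) (hN : Monotone N) : Monotone (grow N) := by
  intro a b hab
  rw [Fin.le_def] at hab ⊢
  by_cases ha : (a : ℕ) = 0
  · have : (grow N a : ℕ) = 0 := by rw [grow, dif_pos ha]; rfl
    omega
  · have hb : (b : ℕ) ≠ 0 := by omega
    rw [grow_val_pos N a ha, grow_val_pos N b hb]
    have := hN (show (⟨(a : ℕ) - 1, by have := a.isLt; omega⟩ : Fin (n+1)) ≤
      ⟨(b : ℕ) - 1, by have := b.isLt; omega⟩ from by rw [Fin.mk_le_mk]; omega)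
    rw [Fin.le_def] at this
    omega

lemma grow_ge (N : Fin (n+1) → Fin (n+1)) (hge : ∀ i : Fin (n+1), (i : ℕ) ≤ (N i : ℕ)) :
    ∀ i : Fin (n+2), (i : ℕ) ≤ (grow N i : ℕ) := by
  intro i
  by_cases hi : (i : ℕ) = 0
  · rw [hi]; omega
  · rw [grow_val_pos N i hi]
    have := hge ⟨(i : ℕ) - 1, by have := i.isLt; omega⟩
    simp only [Fin.val_mk] at this
    omega

lemma shrink_grow (N : Fin (n+1) → Fin (n+1)) : shrink (grow N) = N := by
  funext a
  apply Fin.ext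
  rw [shrink_val, grow_val_pos N a.succ (by rw [Fin.val_succ]; omega)]
  have : (⟨(a.succ : ℕ) - 1, by have := a.succ.isLt; omega⟩ : Fin (n+1)) = a := by
    apply Fin.ext
    rw [Fin.val_mk, Fin.val_succ]
    omega
  rw [this]
  omega

lemma grow_shrink (M : Fin (n+2) → Fin (n+2)) (h0 : M 0 = 0)
    (hge : ∀ i : Fin (n+2), (i : ℕ) ≤ (M i : ℕ)) : grow (shrink M) = M := by
  funext j
  by_cases hj : (j : ℕ) = 0
  · have : j = 0 := Fin.ext hj
    rw [this, grow_zero, h0]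
  · apply Fin.ext
    rw [grow_val_pos _ j hj, shrink_val]
    have hsucc : (⟨(j : ℕ) - 1, by have := j.isLt; omega⟩ : Fin (n+1)).succ = j := by
      apply Fin.ext
      rw [Fin.val_succ]
      show (j : ℕ) - 1 + 1 = (j : ℕ)
      omega
    rw [hsucc]
    have := hge j
    omega

def equivI (n k : ℕ) : {x : Tset (n+1) k // x.1 0 = 0} ≃ Tset n k where
  toFun x := ⟨shrink x.1.1, by
      intro a b hab
      have := x.1.2.1 (Fin.succ_le_succ_iff.2 hab)
      rw [Fin.le_def] at this ⊢
      rw [shrink_val, shrink_val]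
      omega, by
      intro i
      have := x.1.2.2.1 i.succ
      rw [Fin.val_succ] at this
      rw [shrink_val]
      omega, by
      have h1 := x.1.2.2.2
      have h2 := tc_shrink x.1.1 x.2 x.1.2.2.1
      omega⟩
  invFun y := ⟨⟨grow y.1, grow_mono y.1 y.2.1, grow_ge y.1 y.2.2.1, by
      have h2 := tc_shrink (grow y.1) (grow_zero y.1) (grow_ge y.1 y.2.2.1)
      rw [shrink_grow] at h2
      have := y.2.2.2
      omega⟩, grow_zero y.1⟩
  left_inv x := by
    apply Subtype.ext
    apply Subtype.ext
    exact grow_shrink x.1.1 x.2 x.1.2.2.1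
  right_inv y := by
    apply Subtype.ext
    exact shrink_grow y.1

end Shrink

section Cut

variable {n : ℕ}

def fv (M : Fin (n+2) → Fin (n+2)) (m : ℕ) : ℕ := (M ⟨min m (n+1), by omega⟩).val

lemma fv_eq (M : Fin (n+2) → Fin (n+2)) (m : ℕ) (h : m < n+2) :
    fv M m = (M ⟨m, h⟩).val := by
  unfold fv
  congr 2
  apply Fin.ext
  simp only [Fin.val_mk]
  omega

lemma fv_exists_low (M : Fin (n+2) → Fin (n+2)) : ∃ m, fv M m ≤ m + 1 :=
  ⟨n, by rw [fv_eq M n (by omega)]; have := (M ⟨n, by omega⟩).isLt; omega⟩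

def firstLow (M : Fin (n+2) → Fin (n+2)) : ℕ := Nat.find (fv_exists_low M)

lemma firstLow_le (M : Fin (n+2) → Fin (n+2)) : firstLow M ≤ n :=
  Nat.find_le (by rw [fv_eq M n (by omega)]; have := (M ⟨n, by omega⟩).isLt; omega)

lemma firstLow_min (M : Fin (n+2) → Fin (n+2)) {m : ℕ} (h : m < firstLow M) :
    m + 2 ≤ fv M m := by
  have := Nat.find_min (fv_exists_low M) h
  omega

variable (M : Fin (n+2) → Fin (n+2))

lemma firstLow_val (hmono : Monotone M) (hge : ∀ i : Fin (n+2), (i : ℕ) ≤ (M i : ℕ))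
    (h0 : (M 0 : ℕ) ≠ 0) : fv M (firstLow M) = firstLow M + 1 := by
  set t := firstLow M with ht
  have htn : t ≤ n := firstLow_le M
  have hspec : fv M t ≤ t + 1 := Nat.find_spec (fv_exists_low M)
  rw [fv_eq M t (by omega)] at hspec ⊢
  have hge' := hge ⟨t, by omega⟩
  rw [Fin.val_mk] at hge'
  rcases Nat.lt_or_ge (M ⟨t, by omega⟩).val (t+1) with hlt | hge2
  · exfalso
    have heqt : (M ⟨t, by omega⟩).val = t := by omega
    rcases Nat.eq_zero_or_pos t with ht0 | htpos
    · apply h0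
      have : (⟨t, by omega⟩ : Fin (n+2)) = 0 := by
        apply Fin.ext
        simp only [Fin.val_mk, Fin.val_zero]
        exact ht0
      rw [this] at heqt
      omega
    · have hmin := firstLow_min M (show t - 1 < t by omega)
      rw [fv_eq M (t-1) (by omega)] at hmin
      have := hmono (show (⟨t-1, by omega⟩ : Fin (n+2)) ≤ ⟨t, by omega⟩ by
        rw [Fin.mk_le_mk]; omega)
      rw [Fin.le_def] at this
      omega
  · omega

def cutlow : Fin (n+2) → Fin (n+2) :=
  fun j => if (j : ℕ) ≤ firstLow M then ⟨(M j).val - 1, by have := (M j).isLt; omega⟩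
    else M j

lemma cutlow_val_le (j : Fin (n+2)) (h : (j : ℕ) ≤ firstLow M) :
    (cutlow M j : ℕ) = (M j).val - 1 := by rw [cutlow, if_pos h]

lemma cutlow_val_gt (j : Fin (n+2)) (h : ¬ (j : ℕ) ≤ firstLow M) :
    cutlow M j = M j := by rw [cutlow, if_neg h]

def fv_exists_touch (N : Fin (n+2) → Fin (n+2)) : Prop := ∃ m, fv N m = m ∧ m ≤ n

open Classical in
noncomputable def firstTouch (N : Fin (n+2) → Fin (n+2)) (h : fv_exists_touch N) : ℕ :=
  Nat.find h

open Classical in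
lemma firstTouch_le (N : Fin (n+2) → Fin (n+2)) (h : fv_exists_touch N) :
    firstTouch N h ≤ n := (Nat.find_spec h).2

open Classical in
lemma firstTouch_spec (N : Fin (n+2) → Fin (n+2)) (h : fv_exists_touch N) :
    fv N (firstTouch N h) = firstTouch N h := (Nat.find_spec h).1

open Classical in
lemma firstTouch_min (N : Fin (n+2) → Fin (n+2)) (h : fv_exists_touch N) {m : ℕ}
    (hm : m < firstTouch N h) (hmn : m ≤ n) : fv N m ≠ m := by
  have := Nat.find_min h hm
  simp only [not_and] at this
  intro hc
  exact this hc hmn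

noncomputable def cutup (N : Fin (n+2) → Fin (n+2)) (h : fv_exists_touch N) :
    Fin (n+2) → Fin (n+2) :=
  fun j => if (j : ℕ) ≤ firstTouch N h then ⟨min ((N j).val + 1) (n+1), by omega⟩
    else N j

lemma cutup_val_le (N : Fin (n+2) → Fin (n+2)) (h : fv_exists_touch N)
    (hmono : Monotone N) (j : Fin (n+2)) (hj : (j : ℕ) ≤ firstTouch N h) :
    (cutup N h j : ℕ) = (N j).val + 1 := by
  have h1 : (N j).val ≤ n := by
    have hft := firstTouch_le N h
    have hb : firstTouch N h < n+2 := by omega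
    have h2 : (N ⟨firstTouch N h, hb⟩).val = firstTouch N h := by
      rw [← fv_eq N _ hb]; exact firstTouch_spec N h
    have hle := hmono (show j ≤ ⟨firstTouch N h, hb⟩ by rw [Fin.le_def]; exact hj)
    rw [Fin.le_def, h2] at hle
    omega
  rw [cutup, if_pos hj]
  simp only [Fin.val_mk]
  omega

lemma cutup_val_gt (N : Fin (n+2) → Fin (n+2)) (h : fv_exists_touch N) (j : Fin (n+2))
    (hj : ¬ (j : ℕ) ≤ firstTouch N h) : cutup N h j = N j := by
  rw [cutup, if_neg hj]

lemma fv_val (N : Fin (n+2) → Fin (n+2)) (j : Fin (n+2)) : fv N (j : ℕ) = (N j).val := by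
  rw [fv_eq N _ j.isLt]

lemma cutlow_below (M : Fin (n+2) → Fin (n+2)) (j : Fin (n+2))
    (hj : (j : ℕ) < firstLow M) : (j : ℕ) + 2 ≤ (M j).val := by
  have := firstLow_min M hj
  rwa [fv_val] at this

lemma firstTouch_below (N : Fin (n+2) → Fin (n+2)) (h : fv_exists_touch N)
    (hge : ∀ i : Fin (n+2), (i : ℕ) ≤ (N i : ℕ)) (j : Fin (n+2))
    (hj : (j : ℕ) < firstTouch N h) : (j : ℕ) + 1 ≤ (N j).val := by
  have h1 := firstTouch_min N h hj (by have := firstTouch_le N h; omega)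
  rw [fv_val] at h1
  have := hge j
  omega

lemma cutlow_mono (M : Fin (n+2) → Fin (n+2)) (hmono : Monotone M) :
    Monotone (cutlow M) := by
  intro a b hab
  rw [Fin.le_def]
  have hab' := hab
  rw [Fin.le_def] at hab'
  have hm := hmono hab
  rw [Fin.le_def] at hm
  by_cases ha : (a : ℕ) ≤ firstLow M
  · rw [cutlow_val_le M a ha]
    by_cases hb : (b : ℕ) ≤ firstLow M
    · rw [cutlow_val_le M b hb]; omega
    · rw [cutlow_val_gt M b hb]; omega
  · have hb : ¬ (b : ℕ) ≤ firstLow M := by omega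
    rw [cutlow_val_gt M a ha, cutlow_val_gt M b hb]
    exact hm

lemma cutlow_ge (M : Fin (n+2) → Fin (n+2)) (hmono : Monotone M)
    (hge : ∀ i : Fin (n+2), (i : ℕ) ≤ (M i : ℕ)) (h0 : (M 0 : ℕ) ≠ 0) :
    ∀ j : Fin (n+2), (j : ℕ) ≤ (cutlow M j : ℕ) := by
  intro j
  by_cases hj : (j : ℕ) ≤ firstLow M
  · rw [cutlow_val_le M j hj]
    rcases Nat.lt_or_ge (j : ℕ) (firstLow M) with hc | hc
    · have := cutlow_below M j hc
      omega
    · have hjt : (j : ℕ) = firstLow M := by omega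
      have : (M j).val = firstLow M + 1 := by
        rw [← fv_val M j, hjt]
        exact firstLow_val M hmono hge h0
      omega
  · rw [cutlow_val_gt M j hj]
    exact hge j

lemma tc_cutlow (M : Fin (n+2) → Fin (n+2)) (hmono : Monotone M)
    (hge : ∀ i : Fin (n+2), (i : ℕ) ≤ (M i : ℕ)) (h0 : (M 0 : ℕ) ≠ 0) :
    tc (n+1) (cutlow M) = tc (n+1) M + 1 := by
  classical
  have htn : firstLow M ≤ n := firstLow_le M
  have hatm : ∀ j : Fin (n+2), (j : ℕ) = firstLow M → (M j).val = firstLow M + 1 := by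
    intro j hj
    rw [← fv_val M j, hj]
    exact firstLow_val M hmono hge h0
  have key : (Finset.univ.filter fun j : Fin (n+2) => (j : ℕ) < n+1 ∧ cutlow M j = j)
      = insert (⟨firstLow M, by omega⟩ : Fin (n+2))
        (Finset.univ.filter fun j : Fin (n+2) => (j : ℕ) < n+1 ∧ M j = j) := by
    ext j
    simp only [Finset.mem_filter, Finset.mem_univ, true_and, Finset.mem_insert, Fin.ext_iff]
    constructor
    · rintro ⟨hlt, heq⟩
      rcases lt_trichotomy ((j : ℕ)) (firstLow M) with hc | hc | hc
      · exfalso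
        have hbel := cutlow_below M j hc
        rw [cutlow_val_le M j (by omega)] at heq
        omega
      · exact Or.inl hc
      · right
        rw [cutlow_val_gt M j (by omega)] at heq
        exact ⟨hlt, heq⟩
    · rintro (hc | ⟨hlt, heq⟩)
      · refine ⟨by omega, ?_⟩
        rw [cutlow_val_le M j (by omega)]
        have := hatm j hc
        omega
      · rcases lt_trichotomy ((j : ℕ)) (firstLow M) with hc | hc | hc
        · exfalso
          have := cutlow_below M j hc
          omega
        · exfalso
          have := hatm j hc
          omega
        · refine ⟨hlt, ?_⟩
          rw [cutlow_val_gt M j (by omega)]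
          exact heq
  have hnm : (⟨firstLow M, by omega⟩ : Fin (n+2)) ∉
      (Finset.univ.filter fun j : Fin (n+2) => (j : ℕ) < n+1 ∧ M j = j) := by
    simp only [Finset.mem_filter, Finset.mem_univ, true_and, not_and]
    intro _ hc
    have := hatm _ (show ((⟨firstLow M, by omega⟩ : Fin (n+2)) : ℕ) = firstLow M from rfl)
    rw [Fin.ext_iff] at hc
    simp only [Fin.val_mk] at hc
    omega
  rw [tc, tc, key, Finset.card_insert_of_notMem hnm]

lemma cutup_mono (N : Fin (n+2) → Fin (n+2)) (h : fv_exists_touch N)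
    (hmono : Monotone N) (hge : ∀ i : Fin (n+2), (i : ℕ) ≤ (N i : ℕ)) :
    Monotone (cutup N h) := by
  intro a b hab
  rw [Fin.le_def]
  have hab' := hab
  rw [Fin.le_def] at hab'
  have hm := hmono hab
  rw [Fin.le_def] at hm
  by_cases ha : (a : ℕ) ≤ firstTouch N h
  · rw [cutup_val_le N h hmono a ha]
    by_cases hb : (b : ℕ) ≤ firstTouch N h
    · rw [cutup_val_le N h hmono b hb]; omega
    · rw [cutup_val_gt N h b hb]
      -- N a ≤ N ⟨firstTouch⟩ = firstTouch < b ≤ N b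
      have h1 : (N a).val + 1 ≤ (b : ℕ) := by
        have hft := firstTouch_le N h
        have hbnd : firstTouch N h < n + 2 := by omega
        have h2 : (N ⟨firstTouch N h, hbnd⟩).val = firstTouch N h := by
          rw [← fv_eq N _ hbnd]; exact firstTouch_spec N h
        have hle := hmono (show a ≤ ⟨firstTouch N h, hbnd⟩ by rw [Fin.le_def]; exact ha)
        rw [Fin.le_def, h2] at hle
        omega
      have := hge b
      omega
  · have hb : ¬ (b : ℕ) ≤ firstTouch N h := by omega
    rw [cutup_val_gt N h a ha, cutup_val_gt N h b hb]
    exact hm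

lemma cutup_ge (N : Fin (n+2) → Fin (n+2)) (h : fv_exists_touch N) (hmono : Monotone N)
    (hge : ∀ i : Fin (n+2), (i : ℕ) ≤ (N i : ℕ)) :
    ∀ j : Fin (n+2), (j : ℕ) ≤ (cutup N h j : ℕ) := by
  intro j
  by_cases hj : (j : ℕ) ≤ firstTouch N h
  · rw [cutup_val_le N h hmono j hj]
    have := hge j
    omega
  · rw [cutup_val_gt N h j hj]
    exact hge j

lemma cutup_ne0 (N : Fin (n+2) → Fin (n+2)) (h : fv_exists_touch N) (hmono : Monotone N) :
    (cutup N h 0 : ℕ) ≠ 0 := by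
  rw [cutup_val_le N h hmono 0 (by simp)]
  omega

lemma tc_cutup (N : Fin (n+2) → Fin (n+2)) (h : fv_exists_touch N) (hmono : Monotone N)
    (hge : ∀ i : Fin (n+2), (i : ℕ) ≤ (N i : ℕ)) :
    tc (n+1) N = tc (n+1) (cutup N h) + 1 := by
  classical
  have htn : firstTouch N h ≤ n := firstTouch_le N h
  have hatm : ∀ j : Fin (n+2), (j : ℕ) = firstTouch N h → (N j).val = firstTouch N h := by
    intro j hj
    rw [← fv_val N j, hj]
    exact firstTouch_spec N h
  have key : (Finset.univ.filter fun j : Fin (n+2) => (j : ℕ) < n+1 ∧ N j = j)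
      = insert (⟨firstTouch N h, by omega⟩ : Fin (n+2))
        (Finset.univ.filter fun j : Fin (n+2) => (j : ℕ) < n+1 ∧ cutup N h j = j) := by
    ext j
    simp only [Finset.mem_filter, Finset.mem_univ, true_and, Finset.mem_insert, Fin.ext_iff]
    constructor
    · rintro ⟨hlt, heq⟩
      rcases lt_trichotomy ((j : ℕ)) (firstTouch N h) with hc | hc | hc
      · exfalso
        have := firstTouch_min N h hc (by omega)
        rw [fv_val] at this
        omega
      · exact Or.inl hc
      · right
        refine ⟨hlt, ?_⟩
        rw [cutup_val_gt N h j (by omega)]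
        exact heq
    · rintro (hc | ⟨hlt, heq⟩)
      · refine ⟨by omega, ?_⟩
        rw [hatm j hc]
        omega
      · rcases lt_trichotomy ((j : ℕ)) (firstTouch N h) with hc | hc | hc
        · exfalso
          rw [cutup_val_le N h hmono j (by omega)] at heq
          have := hge j
          omega
        · exfalso
          rw [cutup_val_le N h hmono j (by omega)] at heq
          have := hatm j hc
          omega
        · refine ⟨hlt, ?_⟩
          rw [← cutup_val_gt N h j (by omega)]
          exact heq
  have hnm : (⟨firstTouch N h, by omega⟩ : Fin (n+2)) ∉
      (Finset.univ.filter fun j : Fin (n+2) => (j : ℕ) < n+1 ∧ cutup N h j = j) := by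
    simp only [Finset.mem_filter, Finset.mem_univ, true_and, not_and]
    intro _ hc
    rw [Fin.ext_iff] at hc
    rw [cutup_val_le N h hmono _ (by exact le_refl _)] at hc
    have := hatm (⟨firstTouch N h, by omega⟩ : Fin (n+2)) rfl
    simp only [Fin.val_mk] at hc
    omega
  rw [tc, tc, key, Finset.card_insert_of_notMem hnm]

lemma cutup_cutlow (M : Fin (n+2) → Fin (n+2)) (hmono : Monotone M)
    (hge : ∀ i : Fin (n+2), (i : ℕ) ≤ (M i : ℕ)) (h0 : (M 0 : ℕ) ≠ 0) :
    ∃ h : fv_exists_touch (cutlow M), cutup (cutlow M) h = M := by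
  classical
  have htn : firstLow M ≤ n := firstLow_le M
  have hval := firstLow_val M hmono hge h0
  have hspec : fv (cutlow M) (firstLow M) = firstLow M := by
    rw [fv_eq _ _ (show firstLow M < n+2 by omega),
      cutlow_val_le M _ (by exact le_refl _)]
    rw [fv_eq M _ (show firstLow M < n+2 by omega)] at hval
    omega
  have hTex : fv_exists_touch (cutlow M) := ⟨firstLow M, hspec, htn⟩
  have hft : firstTouch (cutlow M) hTex = firstLow M := by
    unfold firstTouch
    refine (Nat.find_eq_iff hTex).2 ?_
    refine ⟨⟨hspec, htn⟩, ?_⟩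
    intro m hm
    simp only [not_and]
    intro hc _
    have hb := cutlow_below M ⟨m, by omega⟩ hm
    rw [fv_eq _ _ (show m < n+2 by omega), cutlow_val_le M _ (by exact le_of_lt hm)] at hc
    simp only [Fin.val_mk] at hb
    omega
  refine ⟨hTex, ?_⟩
  funext j
  apply Fin.ext
  by_cases hj : (j : ℕ) ≤ firstTouch (cutlow M) hTex
  · rw [cutup_val_le _ hTex (cutlow_mono M hmono) j hj, cutlow_val_le M j (by omega)]
    rw [hft] at hj
    rcases Nat.lt_or_ge ((j : ℕ)) (firstLow M) with hc | hc
    · have := cutlow_below M j hc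
      omega
    · have hjt : (j : ℕ) = firstLow M := by omega
      have : (M j).val = firstLow M + 1 := by
        rw [← fv_val M j, hjt]
        exact hval
      omega
  · rw [cutup_val_gt _ hTex j hj, cutlow_val_gt M j (by rw [hft] at hj; omega)]

lemma cutlow_cutup (N : Fin (n+2) → Fin (n+2)) (h : fv_exists_touch N) (hmono : Monotone N)
    (hge : ∀ i : Fin (n+2), (i : ℕ) ≤ (N i : ℕ)) :
    cutlow (cutup N h) = N := by
  classical
  have htn : firstTouch N h ≤ n := firstTouch_le N h
  have hat : ∀ j : Fin (n+2), (j : ℕ) = firstTouch N h → (N j).val = firstTouch N h := by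
    intro j hj
    rw [← fv_val N j, hj]
    exact firstTouch_spec N h
  have hfl : firstLow (cutup N h) = firstTouch N h := by
    rw [firstLow, Nat.find_eq_iff]
    constructor
    · rw [fv_eq _ _ (show firstTouch N h < n+2 by omega),
        cutup_val_le N h hmono _ (by exact le_refl _)]
      have := hat ⟨firstTouch N h, by omega⟩ rfl
      omega
    · intro m hm
      have hmlt : m < n+2 := by omega
      have hb := firstTouch_below N h hge ⟨m, hmlt⟩ hm
      rw [fv_eq _ _ hmlt, cutup_val_le N h hmono _ (by exact le_of_lt hm)]
      simp only [Fin.val_mk] at hb ⊢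
      omega
  funext j
  apply Fin.ext
  by_cases hj : (j : ℕ) ≤ firstLow (cutup N h)
  · rw [cutlow_val_le _ j hj, cutup_val_le N h hmono j (by rw [hfl] at hj; exact hj)]
    omega
  · rw [cutlow_val_gt _ j hj, cutup_val_gt N h j (by rw [hfl] at hj; exact hj)]

end Cut



section Rec

variable {n : ℕ}

lemma touch_exists {k : ℕ} (hk : k ≤ n) (N : Fin (n+2) → Fin (n+2))
    (htc : tc (n+1) N + k = n+1) : fv_exists_touch N := by
  classical
  have hpos : 0 < tc (n+1) N := by omega
  rw [tc, Finset.card_pos] at hpos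
  obtain ⟨j, hj⟩ := hpos
  rw [Finset.mem_filter] at hj
  refine ⟨(j : ℕ), ?_, by omega⟩
  rw [fv_val, hj.2.2]

noncomputable def equivII (n k : ℕ) (hk : k ≤ n) : {x : Tset (n+1) (k+1) // x.1 0 ≠ 0} ≃ Tset (n+1) k where
  toFun x := ⟨cutlow x.1.1, cutlow_mono _ x.1.2.1,
    cutlow_ge _ x.1.2.1 x.1.2.2.1 (fun hv => x.2 (Fin.ext hv)), by
      have h1 := tc_cutlow x.1.1 x.1.2.1 x.1.2.2.1 (fun hv => x.2 (Fin.ext hv))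
      have h2 := x.1.2.2.2
      omega⟩
  invFun y :=
    have h : fv_exists_touch y.1 := touch_exists hk y.1 y.2.2.2
    ⟨⟨cutup y.1 h, cutup_mono _ h y.2.1 y.2.2.1, cutup_ge _ h y.2.1 y.2.2.1, by
      have h1 := tc_cutup y.1 h y.2.1 y.2.2.1
      have h2 := y.2.2.2
      omega⟩, fun hc => cutup_ne0 y.1 h y.2.1 (congrArg Fin.val (show cutup y.1 h 0 = 0 from hc))⟩
  left_inv x := by
    apply Subtype.ext
    apply Subtype.ext
    obtain ⟨h2, hh⟩ := cutup_cutlow x.1.1 x.1.2.1 x.1.2.2.1 (fun hv => x.2 (Fin.ext hv))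
    exact hh
  right_inv y := by
    apply Subtype.ext
    exact cutlow_cutup y.1 _ y.2.1 y.2.2.1

end Rec

lemma t_rec (n k : ℕ) (hk : k ≤ n) : t (n+1) (k+1) = t n (k+1) + t (n+1) k := by
  classical
  have e : Tset (n+1) (k+1) ≃
      {x : Tset (n+1) (k+1) // x.1 0 = 0} ⊕ {x : Tset (n+1) (k+1) // ¬ x.1 0 = 0} :=
    (Equiv.sumCompl _).symm
  rw [t, Nat.card_congr e, Nat.card_sum]
  rw [Nat.card_congr (equivI n (k+1)), Nat.card_congr (equivII n k hk)]
  rfl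

lemma t_succ_formula : ∀ n, ∀ k, k ≤ n →
    t n (k+1) + Nat.choose (n+k+1) k = Nat.choose (n+k+1) (k+1) := by
  intro n
  induction n with
  | zero =>
    intro k hk
    interval_cases k
    rw [t_zero (by omega)]
    simp
  | succ n IH =>
    intro k
    induction k with
    | zero =>
      intro _
      have h1 := t_rec n 0 (Nat.zero_le n)
      have h2 := t_base (n+1)
      have h3 := IH 0 (Nat.zero_le n)
      simp only [Nat.zero_add, Nat.add_zero, Nat.choose_zero_right, Nat.choose_one_right] at h1 h3 ⊢
      omega
    | succ j IHj =>
      intro hj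
      by_cases hjn : j + 1 ≤ n
      · have hrec := t_rec n (j+1) hjn
        have hIH1 := IH (j+1) hjn
        have hIH2 := IHj (by omega)
        rw [show n + 1 + j + 1 = n + j + 2 by omega] at hIH2
        rw [show n + (j + 1) + 1 = n + j + 2 by omega] at hIH1
        rw [show n + 1 + (j + 1) + 1 = n + j + 3 by omega]
        have hp1 := Nat.choose_succ_succ (n+j+2) (j+1)
        have hp2 := Nat.choose_succ_succ (n+j+2) j
        simp only [Nat.succ_eq_add_one] at hp1 hp2
        rw [show n + j + 2 + 1 = n + j + 3 by omega] at hp1 hp2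
        omega
      · have hj' : j = n := by omega
        subst hj'
        rw [t_zero (by omega)]
        rw [show j + 1 + (j + 1) + 1 = 2*j + 3 by omega]
        have hsym := Nat.choose_symm (show j + 2 ≤ 2*j+3 by omega)
        rw [show 2*j + 3 - (j + 2) = j + 1 by omega] at hsym
        rw [show j + 1 + 1 = j + 2 by omega]
        omega

lemma t_eq (n k : ℕ) (hk : k ≤ n) :
    (n+1) * t n k = (n - k + 1) * Nat.choose (n+k) k := by
  cases k with
  | zero =>
    rw [t_base]
    simp
  | succ j =>
    have hjn : j ≤ n := by omega
    show (n+1) * t n (j+1) = (n - (j+1) + 1) * Nat.choose (n+(j+1)) (j+1)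
    rw [show n + (j+1) = n + j + 1 by omega]
    have hc := t_succ_formula n j hjn
    have hmul : (n+1) * Nat.choose (n+j+1) j = (j+1) * Nat.choose (n+j+1) (j+1) := by
      have h1 := Nat.choose_succ_right_eq (n+j+1) j
      rw [show n + j + 1 - j = n + 1 by omega] at h1
      rw [Nat.mul_comm (n+1), Nat.mul_comm (j+1)]
      exact h1.symm
    have hsum : (n+1) * t n (j+1) + (n+1) * Nat.choose (n+j+1) j
        = (n+1) * Nat.choose (n+j+1) (j+1) := by
      rw [← Nat.mul_add, hc]
    rw [hmul] at hsum
    have hsplit : (n+1) * Nat.choose (n+j+1) (j+1)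
        = (n - (j+1) + 1) * Nat.choose (n+j+1) (j+1) + (j+1) * Nat.choose (n+j+1) (j+1) := by
      rw [← Nat.add_mul]
      congr 1
      omega
    omega

section RankLemma

lemma downclosed_mem_iff {c : ℕ} (Q : Finset (Fin c))
    (hdc : ∀ k' k'' : Fin c, k' ≤ k'' → k'' ∈ Q → k' ∈ Q) (k : Fin c) :
    k ∈ Q ↔ (k : ℕ) < Q.card := by
  constructor
  · intro hk
    have hsub : Finset.Iic k ⊆ Q := by
      intro x hx
      exact hdc x k (Finset.mem_Iic.1 hx) hk
    have := Finset.card_le_card hsub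
    rw [Fin.card_Iic] at this
    omega
  · intro hk
    by_contra hc
    have hsub : Q ⊆ Finset.Iio k := by
      intro x hx
      rw [Finset.mem_Iio]
      by_contra hxk
      exact hc (hdc k x (le_of_not_gt hxk) hx)
    have := Finset.card_le_card hsub
    rw [Fin.card_Iio] at this
    omega

lemma orderEmbOfFin_le_iff {N c : ℕ} (s : Finset (Fin N)) (h : s.card = c) (k : Fin c)
    (a : Fin N) :
    s.orderEmbOfFin h k ≤ a ↔ (k : ℕ) < (s.filter (· ≤ a)).card := by
  classical
  set f := s.orderEmbOfFin h with hf
  set Q := Finset.univ.filter (fun k' : Fin c => f k' ≤ a) with hQ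
  have himg : s.filter (· ≤ a) = Q.image f := by
    ext x
    simp only [Finset.mem_filter, Finset.mem_univ, true_and, Finset.mem_image, hQ]
    constructor
    · rintro ⟨hxs, hxa⟩
      have : x ∈ Set.range f := by
        rw [hf, Finset.range_orderEmbOfFin]
        exact hxs
      obtain ⟨k', hk'⟩ := this
      exact ⟨k', by rw [hk']; exact hxa, hk'⟩
    · rintro ⟨k', hk'a, hk'⟩
      rw [← hk']
      exact ⟨Finset.orderEmbOfFin_mem s h k', hk'a⟩
  have hcard : (s.filter (· ≤ a)).card = Q.card := by
    rw [himg, Finset.card_image_of_injective _ f.injective]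
  have hdc : ∀ k' k'' : Fin c, k' ≤ k'' → k'' ∈ Q → k' ∈ Q := by
    intro k' k'' hle hk''
    simp only [hQ, Finset.mem_filter, Finset.mem_univ, true_and] at hk'' ⊢
    exact le_trans (f.monotone hle) hk''
  have hmem : f k ≤ a ↔ k ∈ Q := by
    simp [hQ]
  rw [hmem, downclosed_mem_iff Q hdc k, hcard]

lemma compl_filter_card {N : ℕ} (s : Finset (Fin (N+1))) (a : Fin (N+1)) :
    (sᶜ.filter (· ≤ a)).card + (s.filter (· ≤ a)).card = (a : ℕ) + 1 := by
  classical
  have h1 : (Finset.Iic a).filter (· ∈ s) = s.filter (· ≤ a) := by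
    ext x
    simp only [Finset.mem_filter, Finset.mem_Iic]
    tauto
  have h2 : (Finset.Iic a).filter (¬ · ∈ s) = sᶜ.filter (· ≤ a) := by
    ext x
    simp only [Finset.mem_filter, Finset.mem_Iic, Finset.mem_compl]
    tauto
  have h3 := Finset.card_filter_add_card_filter_not (s := Finset.Iic a)
    (p := (· ∈ s))
  rw [h1, h2, Fin.card_Iic] at h3
  omega

end RankLemma

section Rmax

variable {n : ℕ}

noncomputable def rmax (π : Equiv.Perm (Fin (n+1))) (i : Fin (n+1)) : Fin (n+1) :=
  (Finset.Iic i).sup' ⟨i, Finset.mem_Iic.2 le_rfl⟩ π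

lemma le_rmax (π : Equiv.Perm (Fin (n+1))) {j i : Fin (n+1)} (h : j ≤ i) :
    π j ≤ rmax π i :=
  Finset.le_sup' π (Finset.mem_Iic.2 h)

lemma rmax_mono (π : Equiv.Perm (Fin (n+1))) : Monotone (rmax π) := by
  intro a b hab
  apply Finset.sup'_le
  intro j hj
  exact le_rmax π (le_trans (Finset.mem_Iic.1 hj) hab)

lemma exists_rmax (π : Equiv.Perm (Fin (n+1))) (i : Fin (n+1)) :
    ∃ j, j ≤ i ∧ π j = rmax π i := by
  obtain ⟨j, hj, hje⟩ := Finset.exists_mem_eq_sup' (⟨i, Finset.mem_Iic.2 le_rfl⟩ :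
    (Finset.Iic i).Nonempty) π
  exact ⟨j, Finset.mem_Iic.1 hj, hje.symm⟩

lemma self_le_rmax (π : Equiv.Perm (Fin (n+1))) (i : Fin (n+1)) :
    (i : ℕ) ≤ (rmax π i : ℕ) := by
  classical
  have hsub : (Finset.Iic i).image π ⊆ Finset.Iic (rmax π i) := by
    intro x hx
    obtain ⟨j, hj, hje⟩ := Finset.mem_image.1 hx
    rw [Finset.mem_Iic] at hj ⊢
    rw [← hje]
    exact le_rmax π hj
  have hcard := Finset.card_le_card hsub
  rw [Finset.card_image_of_injective _ π.injective, Fin.card_Iic, Fin.card_Iic] at hcard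
  omega

lemma breakpoint_iff (π : Equiv.Perm (Fin (n+1))) (c : ℕ) (hc1 : 1 ≤ c) (hc2 : c ≤ n) :
    ((fun x : Fin (n+1) => π x) '' {x : Fin (n+1) | (x : ℕ) < c} =
      {x : Fin (n+1) | (x : ℕ) < c}) ↔
    rmax π ⟨c - 1, by omega⟩ = ⟨c - 1, by omega⟩ := by
  classical
  set i : Fin (n+1) := ⟨c - 1, by omega⟩ with hi
  have hset : {x : Fin (n+1) | (x : ℕ) < c} = Set.Iic i := by
    ext x
    simp only [Set.mem_setOf_eq, Set.mem_Iic, hi, Fin.le_def, Fin.val_mk]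
    omega
  rw [hset]
  constructor
  · intro himg
    apply le_antisymm
    · apply Finset.sup'_le
      intro j hj
      rw [Finset.mem_Iic] at hj
      have : π j ∈ Set.Iic i := by
        rw [← himg]
        exact ⟨j, hj, rfl⟩
      exact this
    · rw [Fin.le_def]
      exact self_le_rmax π i
  · intro hr
    have hsub : (fun x : Fin (n+1) => π x) '' Set.Iic i ⊆ Set.Iic i := by
      rintro x ⟨j, hj, hje⟩
      rw [← hje]
      rw [Set.mem_Iic] at hj ⊢
      calc π j ≤ rmax π i := le_rmax π hj
        _ = i := hr
    apply Set.eq_of_subset_of_ncard_le hsub _ (Set.toFinite _)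
    rw [Set.ncard_image_of_injective _ π.injective]

lemma card_breakpoints (π : Equiv.Perm (Fin (n+1))) :
    Nat.card {i : ℕ // 1 ≤ i ∧ i ≤ n ∧
      (fun x : Fin (n+1) => π x) '' {x : Fin (n+1) | (x : ℕ) < i} =
        {x : Fin (n+1) | (x : ℕ) < i}} = tc n (rmax π) := by
  classical
  have e : {i : ℕ // 1 ≤ i ∧ i ≤ n ∧
      (fun x : Fin (n+1) => π x) '' {x : Fin (n+1) | (x : ℕ) < i} =
        {x : Fin (n+1) | (x : ℕ) < i}} ≃
      {j : Fin (n+1) // (j : ℕ) < n ∧ rmax π j = j} := by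
    refine ⟨fun x => ⟨⟨x.1 - 1, by have := x.2.2.1; omega⟩, ?_, ?_⟩,
      fun y => ⟨(y.1 : ℕ) + 1, ⟨by omega, by have := y.2.1; omega, ?_⟩⟩, ?_, ?_⟩
    · have := x.2.1
      have := x.2.2.1
      simp only [Fin.val_mk]
      omega
    · exact (breakpoint_iff π x.1 x.2.1 x.2.2.1).1 x.2.2.2
    · have hb := (breakpoint_iff π ((y.1 : ℕ) + 1) (by omega) (by have := y.2.1; omega)).2
      have hy : (⟨(y.1 : ℕ) + 1 - 1, by omega⟩ : Fin (n+1)) = y.1 := by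
        apply Fin.ext
        simp
      rw [hy] at hb
      exact hb y.2.2
    · intro x
      apply Subtype.ext
      have := x.2.1
      simp only [Fin.val_mk]
      omega
    · intro y
      apply Subtype.ext
      apply Fin.ext
      simp
  rw [Nat.card_congr e, Nat.card_eq_fintype_card, tc]
  exact Fintype.card_subtype _

end Rmax

section Build

variable {n : ℕ}

def Jset (M : Fin (n+1) → Fin (n+1)) : Finset (Fin (n+1)) :=
  Finset.univ.filter (fun i => ∀ j, j < i → M j < M i)

lemma mem_Jset {M : Fin (n+1) → Fin (n+1)} {i : Fin (n+1)} :
    i ∈ Jset M ↔ ∀ j, j < i → M j < M i := by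
  simp [Jset]

def Vset (M : Fin (n+1) → Fin (n+1)) : Finset (Fin (n+1)) := (Jset M).image M

lemma zero_mem_Jset (M : Fin (n+1) → Fin (n+1)) : 0 ∈ Jset M := by
  rw [mem_Jset]
  intro j hj
  exact absurd hj (by simp)

lemma injOn_Jset (M : Fin (n+1) → Fin (n+1)) : Set.InjOn M (Jset M) := by
  intro a ha b hb hab
  rcases lt_trichotomy a b with h | h | h
  · exact absurd hab (ne_of_lt (mem_Jset.1 hb a h))
  · exact h
  · exact absurd hab.symm (ne_of_lt (mem_Jset.1 ha b h))

lemma cardVc (M : Fin (n+1) → Fin (n+1)) : (Vset M)ᶜ.card = (Jset M)ᶜ.card := by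
  classical
  rw [Finset.card_compl, Finset.card_compl, Vset, Finset.card_image_of_injOn (injOn_Jset M)]

lemma cnt_eq (M : Fin (n+1) → Fin (n+1)) (hmono : Monotone M) (i : Fin (n+1)) :
    ((Vset M).filter (· ≤ M i)).card = ((Jset M).filter (· ≤ i)).card := by
  classical
  have himg : ((Jset M).filter (· ≤ i)).image M = (Vset M).filter (· ≤ M i) := by
    ext v
    simp only [Finset.mem_image, Finset.mem_filter, Vset]
    constructor
    · rintro ⟨a, ⟨haJ, hai⟩, hav⟩
      exact ⟨⟨a, haJ, hav⟩, by rw [← hav]; exact hmono hai⟩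
    · rintro ⟨⟨a, haJ, hav⟩, hvM⟩
      refine ⟨a, ⟨haJ, ?_⟩, hav⟩
      by_contra hc
      have : M i < M a := mem_Jset.1 haJ i (lt_of_not_ge hc)
      rw [hav] at this
      exact absurd hvM (not_le_of_gt this)
  rw [← himg, Finset.card_image_of_injOn ((injOn_Jset M).mono (by
    intro x hx
    exact (Finset.mem_filter.1 hx).1))]

lemma exists_last_jump (M : Fin (n+1) → Fin (n+1)) (hmono : Monotone M) (i : Fin (n+1)) :
    ∃ l, l ∈ Jset M ∧ l ≤ i ∧ M l = M i := by
  classical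
  set S := (Finset.Iic i).filter (fun j => M j = M i) with hS
  have hne : S.Nonempty := ⟨i, by simp [hS]⟩
  set l := S.min' hne with hl
  have hlS : l ∈ S := S.min'_mem hne
  rw [hS, Finset.mem_filter, Finset.mem_Iic] at hlS
  refine ⟨l, ?_, hlS.1, hlS.2⟩
  rw [mem_Jset]
  intro j hj
  apply lt_of_le_of_ne (hmono (le_of_lt hj))
  intro hc
  have hjS : j ∈ S := by
    rw [hS, Finset.mem_filter, Finset.mem_Iic]
    exact ⟨le_trans (le_of_lt hj) hlS.1, by rw [← hlS.2]; exact hc⟩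
  exact absurd (S.min'_le j hjS) (not_le_of_gt hj)

noncomputable def buildFun (M : Fin (n+1) → Fin (n+1)) : Fin (n+1) → Fin (n+1) :=
  fun i =>
    if h : i ∈ Jset M then M i
    else (Vset M)ᶜ.orderEmbOfFin (cardVc M)
      (((Jset M)ᶜ.orderIsoOfFin rfl).symm ⟨i, by simp [h]⟩)

lemma rank_iff (M : Fin (n+1) → Fin (n+1)) {i : Fin (n+1)} (hi : i ∉ Jset M)
    (a : Fin (n+1)) :
    ((((Jset M)ᶜ.orderIsoOfFin rfl).symm ⟨i, by simp [hi]⟩ : ℕ) <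
      ((Jset M)ᶜ.filter (· ≤ a)).card) ↔ i ≤ a := by
  classical
  set r := ((Jset M)ᶜ.orderIsoOfFin rfl).symm ⟨i, by simp [hi]⟩ with hr
  have hfr : (Jset M)ᶜ.orderEmbOfFin rfl r = i := by
    rw [← Finset.coe_orderIsoOfFin_apply, hr]
    rw [OrderIso.apply_symm_apply]
  rw [← orderEmbOfFin_le_iff (Jset M)ᶜ rfl r a, hfr]

lemma build_le (M : Fin (n+1) → Fin (n+1)) (hmono : Monotone M)
    (hge : ∀ i : Fin (n+1), (i : ℕ) ≤ (M i : ℕ)) (i : Fin (n+1)) :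
    buildFun M i ≤ M i := by
  classical
  by_cases h : i ∈ Jset M
  · simp only [buildFun]
    rw [dif_pos h]
  · simp only [buildFun]
    rw [dif_neg h]
    rw [orderEmbOfFin_le_iff]
    have h1 := (rank_iff M h i).2 le_rfl
    have h2 := compl_filter_card (Jset M) i
    have h3 := compl_filter_card (Vset M) (M i)
    have h4 := cnt_eq M hmono i
    have h5 := hge i
    omega

lemma build_inj (M : Fin (n+1) → Fin (n+1)) : Function.Injective (buildFun M) := by
  classical
  intro a b hab
  by_cases ha : a ∈ Jset M <;> by_cases hb : b ∈ Jset M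
  · simp only [buildFun] at hab
    rw [dif_pos ha, dif_pos hb] at hab
    exact injOn_Jset M ha hb hab
  · simp only [buildFun] at hab
    rw [dif_pos ha, dif_neg hb] at hab
    exfalso
    have h1 : M a ∈ Vset M := Finset.mem_image_of_mem M ha
    have h2 := Finset.orderEmbOfFin_mem (Vset M)ᶜ (cardVc M)
      (((Jset M)ᶜ.orderIsoOfFin rfl).symm ⟨b, by simp [hb]⟩)
    rw [← hab, Finset.mem_compl] at h2
    exact h2 h1
  · simp only [buildFun] at hab
    rw [dif_neg ha, dif_pos hb] at hab
    exfalso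
    have h1 : M b ∈ Vset M := Finset.mem_image_of_mem M hb
    have h2 := Finset.orderEmbOfFin_mem (Vset M)ᶜ (cardVc M)
      (((Jset M)ᶜ.orderIsoOfFin rfl).symm ⟨a, by simp [ha]⟩)
    rw [hab, Finset.mem_compl] at h2
    exact h2 h1
  · simp only [buildFun] at hab
    rw [dif_neg ha, dif_neg hb] at hab
    have h1 := ((Vset M)ᶜ.orderEmbOfFin (cardVc M)).injective hab
    have h2 := (((Jset M)ᶜ.orderIsoOfFin rfl).symm).injective h1
    exact congrArg Subtype.val h2

noncomputable def buildPerm (M : Fin (n+1) → Fin (n+1)) : Equiv.Perm (Fin (n+1)) :=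
  Equiv.ofBijective (buildFun M) (Finite.injective_iff_bijective.1 (build_inj M))

lemma buildPerm_apply (M : Fin (n+1) → Fin (n+1)) (i : Fin (n+1)) :
    buildPerm M i = buildFun M i := rfl

end Build

section BuildProps

variable {n : ℕ}

lemma rmax_build (M : Fin (n+1) → Fin (n+1)) (hmono : Monotone M)
    (hge : ∀ i : Fin (n+1), (i : ℕ) ≤ (M i : ℕ)) :
    rmax (buildPerm M) = M := by
  funext i
  apply le_antisymm
  · apply Finset.sup'_le
    intro j hj
    rw [Finset.mem_Iic] at hj
    calc buildPerm M j ≤ M j := build_le M hmono hge j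
      _ ≤ M i := hmono hj
  · obtain ⟨l, hlJ, hli, hlM⟩ := exists_last_jump M hmono i
    have : buildPerm M l = M i := by
      rw [buildPerm_apply]
      simp only [buildFun]
      rw [dif_pos hlJ]
      exact hlM
    rw [← this]
    exact Finset.le_sup' _ (Finset.mem_Iic.2 hli)

lemma build_avoids (M : Fin (n+1) → Fin (n+1)) (hmono : Monotone M)
    (hge : ∀ i : Fin (n+1), (i : ℕ) ≤ (M i : ℕ)) :
    Avoids321 (buildPerm M) := by
  intro i j l hij hjl
  rintro ⟨h1, h2⟩
  have hjn : j ∉ Jset M := by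
    intro hJ
    have : buildPerm M i ≤ buildPerm M j := by
      calc buildPerm M i ≤ M i := build_le M hmono hge i
        _ ≤ M j := hmono (le_of_lt hij)
        _ = buildPerm M j := by
            rw [buildPerm_apply]
            simp only [buildFun]
            rw [dif_pos hJ]
    exact absurd h2 (not_lt_of_ge this)
  have hln : l ∉ Jset M := by
    intro hJ
    have : buildPerm M j ≤ buildPerm M l := by
      calc buildPerm M j ≤ M j := build_le M hmono hge j
        _ ≤ M l := hmono (le_of_lt hjl)
        _ = buildPerm M l := by
            rw [buildPerm_apply]
            simp only [buildFun]
            rw [dif_pos hJ]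
    exact absurd h1 (not_lt_of_ge this)
  have hmono2 : buildPerm M j < buildPerm M l := by
    rw [buildPerm_apply, buildPerm_apply]
    simp only [buildFun]
    rw [dif_neg hjn, dif_neg hln]
    apply ((Vset M)ᶜ.orderEmbOfFin (cardVc M)).strictMono
    apply (((Jset M)ᶜ.orderIsoOfFin rfl).symm).strictMono
    exact Subtype.mk_lt_mk.2 hjl
  exact absurd h1 (not_lt_of_ge (le_of_lt hmono2))

lemma avoid_eq_rmax (π : Equiv.Perm (Fin (n+1))) (i : Fin (n+1))
    (hjump : ∀ j, j < i → rmax π j < rmax π i) : π i = rmax π i := by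
  obtain ⟨j, hji, hje⟩ := exists_rmax π i
  rcases lt_or_eq_of_le hji with h | h
  · exfalso
    have h1 : π j ≤ rmax π j := le_rmax π le_rfl
    have h2 := hjump j h
    rw [hje] at h1
    exact absurd h2 (not_lt_of_ge h1)
  · rw [← h] at hje ⊢
    exact hje

lemma avoid_eq_min (π : Equiv.Perm (Fin (n+1))) (hav : Avoids321 π) (i : Fin (n+1))
    (hno : ¬ ∀ j, j < i → rmax π j < rmax π i) :
    π i = (Finset.univ.filter (fun v => ∀ j, j < i → π j ≠ v)).min'
      ⟨π i, by
        simp only [Finset.mem_filter, Finset.mem_univ, true_and]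
        intro j hj hc
        exact absurd (π.injective hc) (ne_of_lt hj)⟩ := by
  classical
  set F := Finset.univ.filter (fun v : Fin (n+1) => ∀ j, j < i → π j ≠ v) with hF
  have hiF : π i ∈ F := by
    simp only [hF, Finset.mem_filter, Finset.mem_univ, true_and]
    intro j hj hc
    exact absurd (π.injective hc) (ne_of_lt hj)
  have hne : F.Nonempty := ⟨π i, hiF⟩
  set m := F.min' hne with hm
  have hmF : m ∈ F := F.min'_mem hne
  have hmle : m ≤ π i := F.min'_le _ hiF
  rcases lt_or_eq_of_le hmle with hlt | heq
  · exfalso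
    set l := π.symm m with hl
    have hπl : π l = m := π.apply_symm_apply m
    have hunused : ∀ j, j < i → π j ≠ m := by
      simp only [hF, Finset.mem_filter] at hmF
      exact hmF.2
    have hil : i < l := by
      rcases lt_trichotomy l i with h | h | h
      · exact absurd hπl (hunused l h)
      · exfalso
        rw [← h, hπl] at hlt
        exact lt_irrefl _ hlt
      · exact h
    push_neg at hno
    obtain ⟨j, hji, hrle⟩ := hno
    have hreq : rmax π j = rmax π i :=
      le_antisymm (rmax_mono π (le_of_lt hji)) hrle
    obtain ⟨j', hj'j, hj'e⟩ := exists_rmax π j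
    have hj'i : j' < i := lt_of_le_of_lt hj'j hji
    have h1 : π i ≤ π j' := by
      rw [hj'e, hreq]
      exact le_rmax π le_rfl
    have h2 : π i ≠ π j' := fun hc => absurd (π.injective hc) (ne_of_gt hj'i)
    have h3 : π i < π j' := lt_of_le_of_ne h1 (fun hc => h2 hc)
    have := hav j' i l hj'i hil
    apply this
    constructor
    · rw [hπl]
      exact hlt
    · exact h3
  · exact heq.symm

lemma avoid_rmax_inj (π π' : Equiv.Perm (Fin (n+1))) (hav : Avoids321 π)
    (hav' : Avoids321 π') (hr : rmax π = rmax π') : π = π' := by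
  classical
  have key : ∀ N : ℕ, ∀ i : Fin (n+1), (i : ℕ) < N → π i = π' i := by
    intro N
    induction N with
    | zero => exact fun i hi => absurd hi (Nat.not_lt_zero _)
    | succ N IH =>
      intro i hiN
      by_cases hjump : ∀ j, j < i → rmax π j < rmax π i
      · rw [avoid_eq_rmax π i hjump, hr,
          avoid_eq_rmax π' i (by rw [← hr]; exact hjump)]
      · have h1 := avoid_eq_min π hav i hjump
        have h2 := avoid_eq_min π' hav' i (by rw [← hr] at *; exact hjump)
        have hFF : (Finset.univ.filter (fun v : Fin (n+1) => ∀ j, j < i → π j ≠ v)) =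
            (Finset.univ.filter (fun v : Fin (n+1) => ∀ j, j < i → π' j ≠ v)) := by
          ext v
          simp only [Finset.mem_filter, Finset.mem_univ, true_and]
          constructor
          · intro h j hj
            rw [← IH j (by rw [Fin.lt_def] at hj; omega)]
            exact h j hj
          · intro h j hj
            rw [IH j (by rw [Fin.lt_def] at hj; omega)]
            exact h j hj
        rw [h1, h2]
        congr 1
  apply Equiv.ext
  intro i
  exact key (n+1) i i.isLt

end BuildProps

noncomputable def masterEquiv (n k : ℕ) (hk : k ≤ n) :
    {π : Equiv.Perm (Fin (n + 1)) // Avoids321 π ∧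
        Nat.card {i : ℕ // 1 ≤ i ∧ i ≤ n ∧
          (fun x : Fin (n + 1) => π x) '' {x : Fin (n + 1) | (x : ℕ) < i} =
            {x : Fin (n + 1) | (x : ℕ) < i}} = n - k} ≃ Tset n k where
  toFun x := ⟨rmax x.1, rmax_mono x.1, self_le_rmax x.1, by
    have h := x.2.2
    rw [card_breakpoints x.1] at h
    omega⟩
  invFun y := ⟨buildPerm y.1, build_avoids y.1 y.2.1 y.2.2.1, by
    rw [card_breakpoints (buildPerm y.1), rmax_build y.1 y.2.1 y.2.2.1]
    have := y.2.2.2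
    omega⟩
  left_inv x := by
    apply Subtype.ext
    exact avoid_rmax_inj (buildPerm (rmax x.1)) x.1
      (build_avoids (rmax x.1) (rmax_mono x.1) (self_le_rmax x.1)) x.2.1
      (rmax_build (rmax x.1) (rmax_mono x.1) (self_le_rmax x.1))
  right_inv y := by
    apply Subtype.ext
    exact rmax_build y.1 y.2.1 y.2.2.1

end Stmt11

/-- For `0 ≤ k ≤ n`, let `N(n,k)` be the number of 321-avoiding permutations `π` of
`{1,…,n+1}` such that exactly `n − k` indices `i ∈ {1,…,n}` satisfy
`π({1,…,i}) = {1,…,i}` (the 1-based initial segment `{1,…,i}` is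
`{x : Fin (n+1) | (x : ℕ) < i}`).  Then `(n+1)·N(n,k) = (n−k+1)·binom(n+k, k)`, i.e. `N(n,k)`
equals the number of standard Young tableaux of shape `(n,k)`. -/
theorem stmt11 (n k : ℕ) (hk : k ≤ n) :
    (n + 1) * Nat.card {π : Equiv.Perm (Fin (n + 1)) // Avoids321 π ∧
        Nat.card {i : ℕ // 1 ≤ i ∧ i ≤ n ∧
          (fun x : Fin (n + 1) => π x) '' {x : Fin (n + 1) | (x : ℕ) < i} =
            {x : Fin (n + 1) | (x : ℕ) < i}} = n - k} =
      (n - k + 1) * Nat.choose (n + k) k := by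
  rw [Nat.card_congr (Stmt11.masterEquiv n k hk)]
  exact Stmt11.t_eq n k hk
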